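/- Let d ≥ 1, R > 0, δ > 0, let μ be a probability measure on ℝ^d supported in the closed Euclidean ball B(0,R), and let p be the density of μ⋆γ_δ, i.e., p(z) = ∫ (2πδ²)^{−d/2} exp(−|z−x|²/(2δ²)) dμ(x). Then −log p is C² and Hess(−log p)(z) ≥ (1/δ² − R²/δ⁴) I_d for all z ∈ ℝ^d. -/

import Mathlib

open MeasureTheory Metric Real
open scoped RealInnerProductSpace

set_option maxHeartbeats 1000000
set_option synthInstance.maxHeartbeats 400000

noncomputable section HessAux

abbrev Ed (d : ℕ) := EuclideanSpace ℝ (Fin d)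

variable {d : ℕ}

instance instNACG2 : NormedAddCommGroup (Ed d →L[ℝ] Ed d →L[ℝ] ℝ) := inferInstance

def fg (δ : ℝ) (z x : Ed d) : ℝ := Real.exp (-‖z - x‖ ^ 2 / (2 * δ ^ 2))

def innerB (d : ℕ) : Ed d →L[ℝ] Ed d →L[ℝ] ℝ := innerSL ℝ

def F1 (δ : ℝ) (z x : Ed d) : Ed d →L[ℝ] ℝ :=
  (-fg δ z x / δ ^ 2) • innerB d (z - x)

def F2 (δ : ℝ) (z x : Ed d) : Ed d →L[ℝ] Ed d →L[ℝ] ℝ :=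
  (fg δ z x / δ ^ 4) • (innerB d (z - x)).smulRight (innerB d (z - x))
    - (fg δ z x / δ ^ 2) • innerB d

lemma fg_pos (δ : ℝ) (z x : Ed d) : 0 < fg δ z x := Real.exp_pos _

lemma fg_le_one (δ : ℝ) (z x : Ed d) : fg δ z x ≤ 1 := by
  rw [fg, Real.exp_le_one_iff]
  have h1 : (0:ℝ) ≤ ‖z - x‖ ^ 2 := by positivity
  have h2 : (0:ℝ) ≤ 2 * δ ^ 2 := by positivity
  exact div_nonpos_of_nonpos_of_nonneg (by linarith) h2

lemma innerB_apply (x v : Ed d) : innerB d x v = ⟪x, v⟫ := rfl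

lemma F1_apply (δ : ℝ) (z x v : Ed d) :
    F1 δ z x v = (-fg δ z x / δ ^ 2) * ⟪z - x, v⟫ := rfl

lemma F2_apply (δ : ℝ) (z x v w : Ed d) :
    F2 δ z x v w = (fg δ z x / δ ^ 4) * (⟪z - x, v⟫ * ⟪z - x, w⟫)
      - (fg δ z x / δ ^ 2) * ⟪v, w⟫ := by
  simp only [F2, ContinuousLinearMap.coe_sub', Pi.sub_apply, ContinuousLinearMap.smul_apply,
    ContinuousLinearMap.smulRight_apply, innerB_apply, smul_eq_mul]

lemma hasFDerivAt_fg (δ : ℝ) (hδ : 0 < δ) (x z : Ed d) :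
    HasFDerivAt (fun z => fg δ z x) (F1 δ z x) z := by
  have h0 : HasFDerivAt (fun z : Ed d => z - x) (ContinuousLinearMap.id ℝ (Ed d)) z :=
    (hasFDerivAt_id z).sub_const x
  have h1 := h0.norm_sq
  have h2 := (h1.const_mul (-(2 * δ ^ 2)⁻¹)).exp
  have harg : ∀ y : Ed d, -(2 * δ ^ 2)⁻¹ * ‖y - x‖ ^ 2 = -‖y - x‖ ^ 2 / (2 * δ ^ 2) := by
    intro y; field_simp
  have heq : (fun z : Ed d => fg δ z x)
      = fun z => Real.exp (-(2 * δ ^ 2)⁻¹ * ‖z - x‖ ^ 2) := by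
    funext y; rw [fg, harg y]
  rw [heq]
  refine h2.congr_fderiv (Eq.symm ?_)
  ext v : 1
  rw [F1_apply]
  simp only [ContinuousLinearMap.smul_apply, ContinuousLinearMap.comp_apply,
    ContinuousLinearMap.coe_id', id_eq, innerSL_apply_apply, smul_eq_mul, nsmul_eq_mul,
    Nat.cast_ofNat, harg z, fg]
  have hδ2 : (δ:ℝ) ≠ 0 := ne_of_gt hδ
  field_simp

lemma hasFDerivAt_F1 (δ : ℝ) (hδ : 0 < δ) (x z : Ed d) :
    HasFDerivAt (fun z => F1 δ z x) (F2 δ z x) z := by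
  have hg0 := (hasFDerivAt_fg δ hδ x z).const_mul (-(δ ^ 2)⁻¹)
  have hgeq : (fun z : Ed d => -(δ ^ 2)⁻¹ * fg δ z x) = fun z => -fg δ z x / δ ^ 2 := by
    funext y; ring
  rw [hgeq] at hg0
  have hL : HasFDerivAt (fun z : Ed d => innerB d (z - x)) (innerB d) z := by
    have h := ((innerB d).hasFDerivAt (x := z - x)).comp z ((hasFDerivAt_id z).sub_const x)
    rw [ContinuousLinearMap.comp_id] at h
    exact h
  have h := hg0.smul hL
  refine h.congr_fderiv (Eq.symm ?_)
  ext v w : 2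
  simp only [F2_apply, ContinuousLinearMap.add_apply, ContinuousLinearMap.smul_apply,
    ContinuousLinearMap.smulRight_apply, F1_apply, innerB_apply, smul_eq_mul]
  have hδ2 : (δ:ℝ) ≠ 0 := ne_of_gt hδ
  field_simp
  ring

lemma norm_innerB_apply (x : Ed d) : ‖innerB d x‖ = ‖x‖ := innerSL_apply_norm ℝ x

lemma norm_F1_le (δ : ℝ) (hδ : 0 < δ) (z x : Ed d) : ‖F1 δ z x‖ ≤ ‖z - x‖ / δ ^ 2 := by
  rw [F1, norm_smul (-fg δ z x / δ ^ 2) (innerB d (z - x)), norm_innerB_apply,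
    Real.norm_eq_abs, abs_div, abs_neg,
    abs_of_pos (fg_pos δ z x), abs_of_pos (show (0:ℝ) < δ ^ 2 by positivity),
    div_mul_eq_mul_div]
  gcongr
  nlinarith [fg_le_one δ z x, fg_pos δ z x, norm_nonneg (z - x)]

lemma norm_F2_le (δ : ℝ) (hδ : 0 < δ) (z x : Ed d) :
    ‖F2 δ z x‖ ≤ ‖z - x‖ ^ 2 / δ ^ 4 + 1 / δ ^ 2 := by
  refine ContinuousLinearMap.opNorm_le_bound _ (by positivity) fun v => ?_
  refine ContinuousLinearMap.opNorm_le_bound _ (by positivity) fun w => ?_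
  rw [F2_apply, Real.norm_eq_abs]
  have h1 := abs_real_inner_le_norm (z - x) v
  have h2 := abs_real_inner_le_norm (z - x) w
  have h3 := abs_real_inner_le_norm v w
  have hf0 := fg_pos δ z x
  have hf1 := fg_le_one δ z x
  have hd4 : (0:ℝ) < δ ^ 4 := by positivity
  have hd2 : (0:ℝ) < δ ^ 2 := by positivity
  have h12 : |⟪z - x, v⟫ * ⟪z - x, w⟫| ≤ (‖z - x‖ * ‖v‖) * (‖z - x‖ * ‖w‖) := by
    rw [abs_mul]
    exact mul_le_mul h1 h2 (abs_nonneg _) (by positivity)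
  refine (abs_sub _ _).trans ?_
  rw [abs_mul (fg δ z x / δ ^ 4) (⟪z - x, v⟫ * ⟪z - x, w⟫),
    abs_mul (fg δ z x / δ ^ 2) ⟪v, w⟫,
    abs_of_pos (by positivity : (0:ℝ) < fg δ z x / δ ^ 4),
    abs_of_pos (by positivity : (0:ℝ) < fg δ z x / δ ^ 2)]
  have e1 : fg δ z x / δ ^ 4 * |⟪z - x, v⟫ * ⟪z - x, w⟫|
      ≤ 1 / δ ^ 4 * ((‖z - x‖ * ‖v‖) * (‖z - x‖ * ‖w‖)) := by
    apply mul_le_mul _ h12 (abs_nonneg _) (by positivity)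
    rw [div_le_div_iff₀ hd4 hd4]
    nlinarith
  have e2 : fg δ z x / δ ^ 2 * |⟪v, w⟫| ≤ 1 / δ ^ 2 * (‖v‖ * ‖w‖) := by
    apply mul_le_mul _ h3 (abs_nonneg _) (by positivity)
    rw [div_le_div_iff₀ hd2 hd2]
    nlinarith
  have hn : (0:ℝ) ≤ ‖v‖ := norm_nonneg v
  have hw : (0:ℝ) ≤ ‖w‖ := norm_nonneg w
  have hzx : (0:ℝ) ≤ ‖z - x‖ := norm_nonneg (z - x)
  calc fg δ z x / δ ^ 4 * |⟪z - x, v⟫ * ⟪z - x, w⟫| + fg δ z x / δ ^ 2 * |⟪v, w⟫|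
      ≤ 1 / δ ^ 4 * ((‖z - x‖ * ‖v‖) * (‖z - x‖ * ‖w‖)) + 1 / δ ^ 2 * (‖v‖ * ‖w‖) :=
        add_le_add e1 e2
    _ = (‖z - x‖ ^ 2 / δ ^ 4 + 1 / δ ^ 2) * ‖v‖ * ‖w‖ := by ring

lemma continuous_fg2 (δ : ℝ) : Continuous fun q : Ed d × Ed d => fg δ q.1 q.2 := by
  unfold fg; fun_prop

lemma continuous_F1_2 (δ : ℝ) : Continuous fun q : Ed d × Ed d => F1 δ q.1 q.2 := by
  unfold F1
  exact (((continuous_fg2 δ).neg).div_const _).smul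
    ((innerB d).continuous.comp (continuous_fst.sub continuous_snd))

lemma continuous_F2_2 (δ : ℝ) : Continuous fun q : Ed d × Ed d => F2 δ q.1 q.2 := by
  unfold F2
  have hι : Continuous fun q : Ed d × Ed d => innerB d (q.1 - q.2) :=
    (innerB d).continuous.comp (continuous_fst.sub continuous_snd)
  have hM : Continuous fun q : Ed d × Ed d =>
      (innerB d (q.1 - q.2)).smulRight (innerB d (q.1 - q.2)) :=
    (ContinuousLinearMap.smulRightL ℝ (Ed d) (Ed d →L[ℝ] ℝ)).continuous₂.comp₂ hι hι
  exact (((continuous_fg2 δ).div_const _).smul hM).sub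
    (((continuous_fg2 δ).div_const _).smul continuous_const)

lemma continuous_fg_x (δ : ℝ) (z : Ed d) : Continuous fun x : Ed d => fg δ z x := by
  unfold fg; fun_prop

lemma continuous_inner_sub (z v : Ed d) : Continuous fun x : Ed d => (⟪z - x, v⟫ : ℝ) :=
  Continuous.inner (continuous_const.sub continuous_id) continuous_const

lemma continuous_inner_right (v : Ed d) : Continuous fun x : Ed d => (⟪x, v⟫ : ℝ) :=
  Continuous.inner continuous_id continuous_const


section Measure

variable {R : ℝ} (δ : ℝ) (μ : Measure (Ed d)) [IsProbabilityMeasure μ]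

def Gf : Ed d → ℝ := fun z => ∫ x, fg δ z x ∂μ

def G1f : Ed d → (Ed d →L[ℝ] ℝ) := fun z => ∫ x, F1 δ z x ∂μ

def G2f : Ed d → (Ed d →L[ℝ] Ed d →L[ℝ] ℝ) := fun z => ∫ x, F2 δ z x ∂μ

lemma integrable_fg (z : Ed d) : Integrable (fun x => fg δ z x) μ :=
  Integrable.mono' (integrable_const 1)
    ((continuous_fg2 δ).comp (continuous_const.prodMk continuous_id)).aestronglyMeasurable
    (ae_of_all μ fun x => by
      rw [Real.norm_eq_abs, abs_of_pos (fg_pos δ z x)]; exact fg_le_one δ z x)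

variable (hδ : 0 < δ) (hae : ∀ᵐ x ∂μ, ‖x‖ ≤ R)

include hδ hae

lemma integrable_F1 (z : Ed d) : Integrable (fun x => F1 δ z x) μ := by
  refine Integrable.mono' (integrable_const ((‖z‖ + R) / δ ^ 2))
    ((continuous_F1_2 δ).comp (continuous_const.prodMk continuous_id)).aestronglyMeasurable
    (hae.mono fun x hx => ?_)
  refine (norm_F1_le δ hδ z x).trans ?_
  gcongr
  exact (norm_sub_le z x).trans (by linarith)

lemma integrable_F2 (z : Ed d) : Integrable (fun x => F2 δ z x) μ := by
  refine Integrable.mono' (integrable_const ((‖z‖ + R) ^ 2 / δ ^ 4 + 1 / δ ^ 2))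
    ((continuous_F2_2 δ).comp (continuous_const.prodMk continuous_id)).aestronglyMeasurable
    (hae.mono fun x hx => ?_)
  refine (norm_F2_le δ hδ z x).trans ?_
  have h1 : ‖z - x‖ ≤ ‖z‖ + R := (norm_sub_le z x).trans (by linarith)
  have h2 : ‖z - x‖ ^ 2 ≤ (‖z‖ + R) ^ 2 := by nlinarith [norm_nonneg (z - x)]
  have := div_le_div_of_nonneg_right h2 (by positivity : (0:ℝ) ≤ δ ^ 4)
  linarith

lemma Gf_pos (z : Ed d) : 0 < Gf δ μ z := by
  have hlow : ∀ᵐ x ∂μ, Real.exp (-(‖z‖ + R) ^ 2 / (2 * δ ^ 2)) ≤ fg δ z x := by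
    refine hae.mono fun x hx => ?_
    rw [fg]
    apply Real.exp_le_exp.2
    have h1 : ‖z - x‖ ≤ ‖z‖ + R := (norm_sub_le z x).trans (by linarith)
    have h2 : ‖z - x‖ ^ 2 ≤ (‖z‖ + R) ^ 2 := by nlinarith [norm_nonneg (z - x)]
    have h3 : (0:ℝ) < 2 * δ ^ 2 := by positivity
    rw [neg_div, neg_div, neg_le_neg_iff]
    gcongr
  calc (0:ℝ) < Real.exp (-(‖z‖ + R) ^ 2 / (2 * δ ^ 2)) := Real.exp_pos _
    _ = ∫ _x, Real.exp (-(‖z‖ + R) ^ 2 / (2 * δ ^ 2)) ∂μ := by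
        rw [integral_const]; simp
    _ ≤ Gf δ μ z := integral_mono_ae (integrable_const _) (integrable_fg δ μ z) hlow

lemma hasFDerivAt_Gf (z : Ed d) : HasFDerivAt (Gf δ μ) (G1f δ μ z) z := by
  simp only [Gf, G1f]
  refine hasFDerivAt_integral_of_dominated_of_fderiv_le (F := fun y x => fg δ y x)
    (F' := fun y x => F1 δ y x) (bound := fun _ => (‖z‖ + 1 + R) / δ ^ 2) (Metric.ball_mem_nhds z one_pos)
    (Filter.Eventually.of_forall fun y =>
      ((continuous_fg2 δ).comp (continuous_const.prodMk continuous_id)).aestronglyMeasurable)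
    (integrable_fg δ μ z)
    ((continuous_F1_2 δ).comp (continuous_const.prodMk continuous_id)).aestronglyMeasurable
    (hae.mono fun x hx y hy => ?_) (integrable_const _)
    (ae_of_all μ fun x y _ => hasFDerivAt_fg δ hδ x y)
  show ‖F1 δ y x‖ ≤ (‖z‖ + 1 + R) / δ ^ 2
  refine (norm_F1_le δ hδ y x).trans ?_
  have hyz : ‖y - z‖ < 1 := by rwa [mem_ball_iff_norm] at hy
  have hy' : ‖y‖ ≤ ‖z‖ + 1 := by
    have := norm_sub_norm_le y z
    linarith
  have h1 : ‖y - x‖ ≤ ‖z‖ + 1 + R := (norm_sub_le y x).trans (by linarith)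
  exact div_le_div_of_nonneg_right h1 (by positivity : (0:ℝ) ≤ δ ^ 2)

lemma hasFDerivAt_G1f (z : Ed d) : HasFDerivAt (G1f δ μ) (G2f δ μ z) z := by
  simp only [G1f, G2f]
  refine hasFDerivAt_integral_of_dominated_of_fderiv_le (F := fun y x => F1 δ y x)
    (F' := fun y x => F2 δ y x) (bound := fun _ => (‖z‖ + 1 + R) ^ 2 / δ ^ 4 + 1 / δ ^ 2)
    (Metric.ball_mem_nhds z one_pos)
    (Filter.Eventually.of_forall fun y =>
      ((continuous_F1_2 δ).comp (continuous_const.prodMk continuous_id)).aestronglyMeasurable)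
    (integrable_F1 δ μ hδ hae z)
    ((continuous_F2_2 δ).comp (continuous_const.prodMk continuous_id)).aestronglyMeasurable
    (hae.mono fun x hx y hy => ?_) (integrable_const _)
    (ae_of_all μ fun x y _ => hasFDerivAt_F1 δ hδ x y)
  show ‖F2 δ y x‖ ≤ (‖z‖ + 1 + R) ^ 2 / δ ^ 4 + 1 / δ ^ 2
  refine (norm_F2_le δ hδ y x).trans ?_
  have hyz : ‖y - z‖ < 1 := by rwa [mem_ball_iff_norm] at hy
  have hy' : ‖y‖ ≤ ‖z‖ + 1 := by
    have := norm_sub_norm_le y z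
    linarith
  have h1 : ‖y - x‖ ≤ ‖z‖ + 1 + R := (norm_sub_le y x).trans (by linarith)
  have h2 : ‖y - x‖ ^ 2 ≤ (‖z‖ + 1 + R) ^ 2 := by nlinarith [norm_nonneg (y - x)]
  have := div_le_div_of_nonneg_right h2 (by positivity : (0:ℝ) ≤ δ ^ 4)
  linarith

lemma continuous_G2f : Continuous (G2f δ μ) := by
  rw [continuous_iff_continuousAt]
  intro z
  have : ContinuousAt (fun y => ∫ x, F2 δ y x ∂μ) z := by
    refine continuousAt_of_dominated
      (Filter.Eventually.of_forall fun y =>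
        ((continuous_F2_2 δ).comp (continuous_const.prodMk continuous_id)).aestronglyMeasurable)
      (Filter.eventually_of_mem (Metric.ball_mem_nhds z one_pos) fun y hy => ?_)
      (integrable_const ((‖z‖ + 1 + R) ^ 2 / δ ^ 4 + 1 / δ ^ 2))
      (ae_of_all μ fun x =>
        ((continuous_F2_2 δ).comp (continuous_id.prodMk continuous_const)).continuousAt)
    refine hae.mono fun x hx => ?_
    show ‖F2 δ y x‖ ≤ (‖z‖ + 1 + R) ^ 2 / δ ^ 4 + 1 / δ ^ 2
    refine (norm_F2_le δ hδ y x).trans ?_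
    have hyz : ‖y - z‖ < 1 := by rwa [mem_ball_iff_norm] at hy
    have hy' : ‖y‖ ≤ ‖z‖ + 1 := by
      have := norm_sub_norm_le y z
      linarith
    have h1 : ‖y - x‖ ≤ ‖z‖ + 1 + R := (norm_sub_le y x).trans (by linarith)
    have h2 : ‖y - x‖ ^ 2 ≤ (‖z‖ + 1 + R) ^ 2 := by nlinarith [norm_nonneg (y - x)]
    have := div_le_div_of_nonneg_right h2 (by positivity : (0:ℝ) ≤ δ ^ 4)
    linarith
  exact this

lemma contDiff_Gf : ContDiff ℝ 2 (Gf δ μ) := by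
  have h2 : (2 : WithTop ℕ∞) = 1 + 1 := by norm_num
  rw [h2, contDiff_succ_iff_fderiv]
  refine ⟨fun z => (hasFDerivAt_Gf δ μ hδ hae z).differentiableAt, by simp, ?_⟩
  have hfd : fderiv ℝ (Gf δ μ) = G1f δ μ := funext fun z => (hasFDerivAt_Gf δ μ hδ hae z).fderiv
  rw [hfd, contDiff_one_iff_fderiv]
  refine ⟨fun z => (hasFDerivAt_G1f δ μ hδ hae z).differentiableAt, ?_⟩
  have hfd1 : fderiv ℝ (G1f δ μ) = G2f δ μ :=
    funext fun z => (hasFDerivAt_G1f δ μ hδ hae z).fderiv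
  rw [hfd1]
  exact continuous_G2f δ μ hδ hae

lemma ae_absY (z v : Ed d) : ∀ᵐ x ∂μ, |(⟪z - x, v⟫ : ℝ)| ≤ (‖z‖ + R) * ‖v‖ :=
  hae.mono fun x hx => (abs_real_inner_le_norm _ _).trans
    (mul_le_mul_of_nonneg_right ((norm_sub_le z x).trans (by linarith)) (norm_nonneg v))

lemma ae_absX (v : Ed d) : ∀ᵐ x ∂μ, |(⟪x, v⟫ : ℝ)| ≤ R * ‖v‖ :=
  hae.mono fun x hx => (abs_real_inner_le_norm _ _).trans
    (mul_le_mul_of_nonneg_right hx (norm_nonneg v))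

lemma intY (z v : Ed d) : Integrable (fun x => fg δ z x * ⟪z - x, v⟫) μ := by
  refine Integrable.mono' (integrable_const ((‖z‖ + R) * ‖v‖))
    ((continuous_fg_x δ z).mul (continuous_inner_sub z v)).aestronglyMeasurable
    ((ae_absY δ μ hδ hae z v).mono fun x hx => ?_)
  rw [Real.norm_eq_abs, abs_mul, abs_of_pos (fg_pos δ z x)]
  nlinarith [fg_le_one δ z x, fg_pos δ z x, abs_nonneg (⟪z - x, v⟫ : ℝ)]

lemma intY2 (z v : Ed d) : Integrable (fun x => fg δ z x * ⟪z - x, v⟫ ^ 2) μ := by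
  refine Integrable.mono' (integrable_const (((‖z‖ + R) * ‖v‖) ^ 2))
    ((continuous_fg_x δ z).mul ((continuous_inner_sub z v).pow 2)).aestronglyMeasurable
    ((ae_absY δ μ hδ hae z v).mono fun x hx => ?_)
  rw [Real.norm_eq_abs, abs_mul, abs_of_pos (fg_pos δ z x),
    abs_of_nonneg (sq_nonneg (⟪z - x, v⟫ : ℝ))]
  have h2 : (⟪z - x, v⟫ : ℝ) ^ 2 ≤ ((‖z‖ + R) * ‖v‖) ^ 2 := by
    rw [← sq_abs]; exact pow_le_pow_left₀ (abs_nonneg _) hx 2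
  nlinarith [fg_le_one δ z x, fg_pos δ z x, sq_nonneg (⟪z - x, v⟫ : ℝ)]

lemma intX (z v : Ed d) : Integrable (fun x => fg δ z x * ⟪x, v⟫) μ := by
  refine Integrable.mono' (integrable_const (R * ‖v‖))
    ((continuous_fg_x δ z).mul (continuous_inner_right v)).aestronglyMeasurable
    ((ae_absX δ μ hδ hae v).mono fun x hx => ?_)
  rw [Real.norm_eq_abs, abs_mul, abs_of_pos (fg_pos δ z x)]
  nlinarith [fg_le_one δ z x, fg_pos δ z x, abs_nonneg (⟪x, v⟫ : ℝ)]

lemma intX2 (z v : Ed d) : Integrable (fun x => fg δ z x * ⟪x, v⟫ ^ 2) μ := by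
  refine Integrable.mono' (integrable_const ((R * ‖v‖) ^ 2))
    ((continuous_fg_x δ z).mul ((continuous_inner_right v).pow 2)).aestronglyMeasurable
    ((ae_absX δ μ hδ hae v).mono fun x hx => ?_)
  rw [Real.norm_eq_abs, abs_mul, abs_of_pos (fg_pos δ z x),
    abs_of_nonneg (sq_nonneg (⟪x, v⟫ : ℝ))]
  have h2 : (⟪x, v⟫ : ℝ) ^ 2 ≤ (R * ‖v‖) ^ 2 := by
    rw [← sq_abs]; exact pow_le_pow_left₀ (abs_nonneg _) hx 2
  nlinarith [fg_le_one δ z x, fg_pos δ z x, sq_nonneg (⟪x, v⟫ : ℝ)]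

lemma G1f_val (z v : Ed d) :
    G1f δ μ z v = -(δ ^ 2)⁻¹ * ∫ x, fg δ z x * ⟪z - x, v⟫ ∂μ := by
  simp only [G1f]
  rw [ContinuousLinearMap.integral_apply (integrable_F1 δ μ hδ hae z) v, ← integral_const_mul]
  refine integral_congr_ae (ae_of_all μ fun x => ?_)
  simp only [F1_apply]; ring

lemma G2f_val (z v : Ed d) :
    G2f δ μ z v v = (δ ^ 4)⁻¹ * (∫ x, fg δ z x * ⟪z - x, v⟫ ^ 2 ∂μ)
      - (δ ^ 2)⁻¹ * ‖v‖ ^ 2 * Gf δ μ z := by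
  simp only [G2f]
  rw [ContinuousLinearMap.integral_apply (integrable_F2 δ μ hδ hae z) v,
    ContinuousLinearMap.integral_apply
      ((integrable_F2 δ μ hδ hae z).apply_continuousLinearMap v) v]
  have hpt : ∀ x, F2 δ z x v v
      = (δ ^ 4)⁻¹ * (fg δ z x * ⟪z - x, v⟫ ^ 2) - ((δ ^ 2)⁻¹ * ‖v‖ ^ 2) * fg δ z x :=
    fun x => by rw [F2_apply, real_inner_self_eq_norm_sq]; ring
  rw [integral_congr_ae (ae_of_all μ hpt),
    integral_sub ((intY2 δ μ hδ hae z v).const_mul _) ((integrable_fg δ μ z).const_mul _),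
    integral_const_mul, integral_const_mul]
  simp only [Gf]

lemma key_ineq (z v : Ed d) :
    (∫ x, fg δ z x * ⟪z - x, v⟫ ^ 2 ∂μ) * Gf δ μ z
      - (∫ x, fg δ z x * ⟪z - x, v⟫ ∂μ) ^ 2
      ≤ R ^ 2 * ‖v‖ ^ 2 * (Gf δ μ z) ^ 2 := by
  have hintfg := integrable_fg δ μ z
  have hint3 := intX δ μ hδ hae z v
  have hint4 := intX2 δ μ hδ hae z v
  have hGz := Gf_pos δ μ hδ hae z
  have hYX : ∀ x : Ed d, (⟪z - x, v⟫ : ℝ) = ⟪z, v⟫ - ⟪x, v⟫ :=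
    fun x => inner_sub_left _ _ _
  have hB : (∫ x, fg δ z x * ⟪z - x, v⟫ ∂μ)
      = ⟪z, v⟫ * Gf δ μ z - ∫ x, fg δ z x * ⟪x, v⟫ ∂μ := by
    rw [show (fun x => fg δ z x * ⟪z - x, v⟫)
        = fun x => ⟪z, v⟫ * fg δ z x - fg δ z x * ⟪x, v⟫ from
      funext fun x => by rw [hYX x]; ring]
    rw [integral_sub (hintfg.const_mul _) hint3, integral_const_mul]
    simp only [Gf]
  have hA : (∫ x, fg δ z x * ⟪z - x, v⟫ ^ 2 ∂μ)
      = ⟪z, v⟫ ^ 2 * Gf δ μ z - 2 * ⟪z, v⟫ * (∫ x, fg δ z x * ⟪x, v⟫ ∂μ)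
        + ∫ x, fg δ z x * ⟪x, v⟫ ^ 2 ∂μ := by
    rw [show (fun x => fg δ z x * ⟪z - x, v⟫ ^ 2)
        = fun x => (⟪z, v⟫ ^ 2 * fg δ z x - (2 * ⟪z, v⟫) * (fg δ z x * ⟪x, v⟫))
          + fg δ z x * ⟪x, v⟫ ^ 2 from
      funext fun x => by rw [hYX x]; ring]
    have hadd : ∫ x, (⟪z, v⟫ ^ 2 * fg δ z x - (2 * ⟪z, v⟫) * (fg δ z x * ⟪x, v⟫))
          + fg δ z x * ⟪x, v⟫ ^ 2 ∂μ
        = (∫ x, ⟪z, v⟫ ^ 2 * fg δ z x - (2 * ⟪z, v⟫) * (fg δ z x * ⟪x, v⟫) ∂μ)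
          + ∫ x, fg δ z x * ⟪x, v⟫ ^ 2 ∂μ :=
      integral_add (by exact (hintfg.const_mul _).sub (hint3.const_mul _)) hint4
    have hsub : ∫ x, ⟪z, v⟫ ^ 2 * fg δ z x - (2 * ⟪z, v⟫) * (fg δ z x * ⟪x, v⟫) ∂μ
        = (∫ x, ⟪z, v⟫ ^ 2 * fg δ z x ∂μ)
          - ∫ x, (2 * ⟪z, v⟫) * (fg δ z x * ⟪x, v⟫) ∂μ :=
      integral_sub (by exact hintfg.const_mul _) (by exact hint3.const_mul _)
    rw [hadd, hsub, integral_const_mul, integral_const_mul]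
    simp only [Gf]
  have hC : (∫ x, fg δ z x * ⟪x, v⟫ ^ 2 ∂μ) ≤ R ^ 2 * ‖v‖ ^ 2 * Gf δ μ z := by
    have hpt : ∀ᵐ x ∂μ, fg δ z x * ⟪x, v⟫ ^ 2 ≤ (R ^ 2 * ‖v‖ ^ 2) * fg δ z x := by
      refine (ae_absX δ μ hδ hae v).mono fun x hx => ?_
      have h2 : (⟪x, v⟫ : ℝ) ^ 2 ≤ (R * ‖v‖) ^ 2 := by
        rw [← sq_abs]; exact pow_le_pow_left₀ (abs_nonneg _) hx 2
      nlinarith [fg_pos δ z x, fg_le_one δ z x]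
    calc (∫ x, fg δ z x * ⟪x, v⟫ ^ 2 ∂μ)
        ≤ ∫ x, (R ^ 2 * ‖v‖ ^ 2) * fg δ z x ∂μ :=
          integral_mono_ae hint4 (hintfg.const_mul _) hpt
      _ = R ^ 2 * ‖v‖ ^ 2 * Gf δ μ z := by rw [integral_const_mul]; simp only [Gf]
  rw [hA, hB]
  have hCG := mul_le_mul_of_nonneg_right hC hGz.le
  nlinarith [sq_nonneg (∫ x, fg δ z x * ⟪x, v⟫ ∂μ)]

lemma hessian_bound (z v : Ed d) :
    (1 / δ ^ 2 - R ^ 2 / δ ^ 4) * ‖v‖ ^ 2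
      ≤ ((-(Gf δ μ z)⁻¹) • G2f δ μ z
          + (((Gf δ μ z) ^ 2)⁻¹ • G1f δ μ z).smulRight (G1f δ μ z)) v v := by
  have hGz := Gf_pos δ μ hδ hae z
  have hGne : Gf δ μ z ≠ 0 := ne_of_gt hGz
  have hδ2 : (δ : ℝ) ≠ 0 := ne_of_gt hδ
  have hval : ((-(Gf δ μ z)⁻¹) • G2f δ μ z
        + (((Gf δ μ z) ^ 2)⁻¹ • G1f δ μ z).smulRight (G1f δ μ z)) v v
      = ‖v‖ ^ 2 / δ ^ 2
        - ((∫ x, fg δ z x * ⟪z - x, v⟫ ^ 2 ∂μ) * Gf δ μ z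
            - (∫ x, fg δ z x * ⟪z - x, v⟫ ∂μ) ^ 2) / (δ ^ 4 * (Gf δ μ z) ^ 2) := by
    simp only [ContinuousLinearMap.add_apply, ContinuousLinearMap.smul_apply,
      ContinuousLinearMap.smulRight_apply, smul_eq_mul, neg_smul,
      ContinuousLinearMap.neg_apply]
    rw [G1f_val δ μ hδ hae z v, G2f_val δ μ hδ hae z v]
    field_simp
    ring
  rw [hval]
  have h3 : ((∫ x, fg δ z x * ⟪z - x, v⟫ ^ 2 ∂μ) * Gf δ μ z
        - (∫ x, fg δ z x * ⟪z - x, v⟫ ∂μ) ^ 2) / (δ ^ 4 * (Gf δ μ z) ^ 2)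
      ≤ R ^ 2 * ‖v‖ ^ 2 * (Gf δ μ z) ^ 2 / (δ ^ 4 * (Gf δ μ z) ^ 2) :=
    div_le_div_of_nonneg_right (key_ineq δ μ hδ hae z v) (by positivity)
  have h4 : R ^ 2 * ‖v‖ ^ 2 * (Gf δ μ z) ^ 2 / (δ ^ 4 * (Gf δ μ z) ^ 2)
      = R ^ 2 * ‖v‖ ^ 2 / δ ^ 4 := by
    field_simp
  rw [h4] at h3
  have h5 : (1 / δ ^ 2 - R ^ 2 / δ ^ 4) * ‖v‖ ^ 2
      = ‖v‖ ^ 2 / δ ^ 2 - R ^ 2 * ‖v‖ ^ 2 / δ ^ 4 := by ring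
  linarith [h3, h5.le, h5.ge]


end Measure

end HessAux

/-- If `μ` is supported in `B(0,R)` and `p` is the density of `μ ⋆ γ_δ`, then
`-log p` is `C²` and `Hess(-log p) ≥ (1/δ² - R²/δ⁴) I_d`. -/
theorem hessian_neg_log_density (d : ℕ) (hd : 1 ≤ d) (R δ : ℝ) (hR : 0 < R) (hδ : 0 < δ)
    (μ : Measure (EuclideanSpace ℝ (Fin d))) [IsProbabilityMeasure μ]
    (hsupp : μ (closedBall (0 : EuclideanSpace ℝ (Fin d)) R)ᶜ = 0)
    (p : EuclideanSpace ℝ (Fin d) → ℝ)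
    (hp : ∀ z, p z = ∫ x, (2 * π * δ ^ 2) ^ (-(d : ℝ) / 2) *
      Real.exp (-‖z - x‖ ^ 2 / (2 * δ ^ 2)) ∂μ) :
    ContDiff ℝ 2 (fun z => -Real.log (p z)) ∧
    ∀ z v : EuclideanSpace ℝ (Fin d),
      (1 / δ ^ 2 - R ^ 2 / δ ^ 4) * ‖v‖ ^ 2 ≤
        fderiv ℝ (fderiv ℝ (fun z => -Real.log (p z))) z v v := by
  set c : ℝ := (2 * π * δ ^ 2) ^ (-(d : ℝ) / 2) with hcdef
  have hc : 0 < c := Real.rpow_pos_of_pos (by positivity) _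
  have hae : ∀ᵐ x ∂μ, ‖x‖ ≤ R := by
    rw [ae_iff]
    refine measure_mono_null (fun x hx => ?_) hsupp
    simpa [mem_closedBall, dist_zero_right] using hx
  have hpG : ∀ z, p z = c * Gf δ μ z := by
    intro z
    rw [hp z]
    simp only [Gf, fg]
    exact integral_const_mul c _
  have hfun : (fun z : EuclideanSpace ℝ (Fin d) => -Real.log (p z))
      = fun z => -Real.log (c * Gf δ μ z) := by
    funext z; rw [hpG z]
  have hGpos : ∀ z, 0 < Gf δ μ z := fun z => Gf_pos δ μ hδ hae z
  have hne : ∀ w, c * Gf δ μ w ≠ 0 := fun w => ne_of_gt (mul_pos hc (hGpos w))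
  constructor
  · rw [hfun, contDiff_iff_contDiffAt]
    intro z
    exact ((contDiffAt_const.mul (contDiff_Gf δ μ hδ hae).contDiffAt).log (hne z)).neg
  · intro z v
    rw [hfun]
    have hH1 : ∀ w, HasFDerivAt (fun w => -Real.log (c * Gf δ μ w))
        ((-(Gf δ μ w)⁻¹) • G1f δ μ w) w := by
      intro w
      have h := (((hasFDerivAt_Gf δ μ hδ hae w).const_mul c).log (hne w)).neg
      refine h.congr_fderiv (Eq.symm ?_)
      have hsc : (-(Gf δ μ w)⁻¹ : ℝ) = -((c * Gf δ μ w)⁻¹ * c) := by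
        rw [mul_inv, mul_comm (c⁻¹), mul_assoc, inv_mul_cancel₀ hc.ne', mul_one]
      rw [hsc, smul_smul]
      exact neg_smul _ _
    have hfd1 : fderiv ℝ (fun w => -Real.log (c * Gf δ μ w))
        = fun w => (-(Gf δ μ w)⁻¹) • G1f δ μ w := funext fun w => (hH1 w).fderiv
    have hm : HasFDerivAt (fun w => -(Gf δ μ w)⁻¹)
        (((Gf δ μ z) ^ 2)⁻¹ • G1f δ μ z) z := by
      have h := ((hasDerivAt_inv (ne_of_gt (hGpos z))).neg).comp_hasFDerivAt z
        (hasFDerivAt_Gf δ μ hδ hae z)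
      simp at h; exact h
    have hH2 : HasFDerivAt (fun w => (-(Gf δ μ w)⁻¹) • G1f δ μ w)
        ((-(Gf δ μ z)⁻¹) • G2f δ μ z
          + (((Gf δ μ z) ^ 2)⁻¹ • G1f δ μ z).smulRight (G1f δ μ z)) z :=
      hm.smul (hasFDerivAt_G1f δ μ hδ hae z)
    rw [hfd1, hH2.fderiv]
    exact hessian_bound δ μ hδ hae z v
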